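/- Let A be an (n−1)-dimensional maximal abelian subalgebra of sl(n,ℝ) with A² = 0 (all products of two elements vanish) such that (ℝ·Id ⊕ A) ⋉ ℝⁿ is a Frobenius Lie algebra. Then A is conjugate in gl(n,ℝ) to the algebra spanned by the elementary matrices E_{1,j}, j = 2,…,n. -/

import Mathlib

/-- If `A` is an `(n-1)`-dimensional MASA of `sl(n,ℝ)` with `A² = 0` and
`(ℝ·Id ⊕ A) ⋉ ℝⁿ` is a Frobenius Lie algebra, then `A` is conjugate in `gl(n,ℝ)` to
the span of the elementary matrices `E_{1,j}`, `j = 2,…,n`. -/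
theorem stmt9 {n : ℕ} (hn : 0 < n)
    (A : Submodule ℝ (Matrix (Fin n) (Fin n) ℝ))
    (htrace : ∀ a ∈ A, Matrix.trace a = 0)
    (hA2 : ∀ a ∈ A, ∀ b ∈ A, a * b = 0)
    (hmasa : ∀ b : Matrix (Fin n) (Fin n) ℝ, Matrix.trace b = 0 →
      (∀ a ∈ A, b * a = a * b) → b ∈ A)
    (hdim : Module.finrank ℝ A = n - 1)
    (B : Submodule ℝ (Matrix (Fin n) (Fin n) ℝ))
    (hB : B = Submodule.span ℝ {(1 : Matrix (Fin n) (Fin n) ℝ)} ⊔ A)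
    (hFrob : ∃ β : (B × (Fin n → ℝ)) →ₗ[ℝ] ℝ,
      ∀ u : B × (Fin n → ℝ),
        (∀ v : B × (Fin n → ℝ),
          -β ((0 : B), (u.1 : Matrix (Fin n) (Fin n) ℝ).mulVec v.2 -
            (v.1 : Matrix (Fin n) (Fin n) ℝ).mulVec u.2) = 0) → u = 0) :
    ∃ P : (Matrix (Fin n) (Fin n) ℝ)ˣ,
      (fun M => (P : Matrix (Fin n) (Fin n) ℝ) * M * ((P⁻¹ : (Matrix (Fin n) (Fin n) ℝ)ˣ) :
        Matrix (Fin n) (Fin n) ℝ)) '' (A : Set (Matrix (Fin n) (Fin n) ℝ)) =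
      (Submodule.span ℝ (Set.range fun j : {j : Fin n // j ≠ ⟨0, hn⟩} =>
        Matrix.single (⟨0, hn⟩ : Fin n) j.val (1 : ℝ)) :
          Set (Matrix (Fin n) (Fin n) ℝ)) := by
  classical
  set i0 : Fin n := ⟨0, hn⟩ with hi0def
  set S : Submodule ℝ (Matrix (Fin n) (Fin n) ℝ) :=
    Submodule.span ℝ (Set.range fun j : {j : Fin n // j ≠ i0} =>
      Matrix.single i0 j.val (1 : ℝ)) with hSdef
  by_cases h1 : n = 1
  · -- trivial case n = 1
    subst h1
    have hA0 : ∀ a ∈ A, a = (0 : Matrix (Fin 1) (Fin 1) ℝ) := by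
      intro a ha
      have ht := htrace a ha
      ext i j
      fin_cases i; fin_cases j
      simpa [Matrix.trace, Fin.sum_univ_one] using ht
    have hAbot : A = ⊥ := by
      rw [eq_bot_iff]
      intro a ha
      simp [hA0 a ha]
    have hSbot : S = ⊥ := by
      rw [hSdef, Submodule.span_eq_bot]
      rintro x ⟨j, rfl⟩
      exact absurd (Subsingleton.elim j.val i0) j.2
    refine ⟨1, ?_⟩
    rw [hAbot, hSbot]
    simp
  · -- main case n ≥ 2
    have hn2 : 2 ≤ n := by omega
    obtain ⟨β, hβ⟩ := hFrob
    have hAB : A ≤ B := hB ▸ le_sup_right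
    set γ : (Fin n → ℝ) →ₗ[ℝ] ℝ := β.comp (LinearMap.inr ℝ B (Fin n → ℝ)) with hγdef
    have hγx : ∀ x : Fin n → ℝ, γ x = β ((0 : B), x) := fun x => rfl
    -- injectivity of b ↦ γ ∘ mulVec b on A
    have Inj : ∀ a ∈ A, (∀ x : Fin n → ℝ, γ (Matrix.mulVec a x) = 0) → a = 0 := by
      intro a ha h
      have h0 := hβ (⟨a, hAB ha⟩, 0) ?_
      · exact congrArg (fun u => ((u.1 : B) : Matrix (Fin n) (Fin n) ℝ)) h0
      · intro v
        simp only [Matrix.mulVec_zero, sub_zero]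
        rw [← hγx, h v.2, neg_zero]
    -- K = common kernel
    set K : Submodule ℝ (Fin n → ℝ) :=
      ⨅ a : A, LinearMap.ker (Matrix.mulVecLin (a : Matrix (Fin n) (Fin n) ℝ)) with hKdef
    have hKmem : ∀ x : Fin n → ℝ, x ∈ K ↔ ∀ a ∈ A, Matrix.mulVec a x = 0 := by
      intro x
      rw [hKdef]
      simp only [Submodule.mem_iInf, LinearMap.mem_ker, Matrix.mulVecLin_apply]
      exact ⟨fun h a ha => h ⟨a, ha⟩, fun h a => h a.1 a.2⟩
    have hrange : ∀ a ∈ A, ∀ x : Fin n → ℝ, Matrix.mulVec a x ∈ K := by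
      intro a ha x
      rw [hKmem]
      intro b hb
      rw [Matrix.mulVec_mulVec, hA2 b hb a ha, Matrix.zero_mulVec]
    -- a nonzero element of A
    have hApos : 0 < Module.finrank ℝ A := by rw [hdim]; omega
    have : Nontrivial A := Module.nontrivial_of_finrank_pos hApos
    obtain ⟨a0, ha0⟩ : ∃ a : A, a ≠ 0 := exists_ne 0
    have ha0' : (a0 : Matrix (Fin n) (Fin n) ℝ) ≠ 0 := by
      simpa [Submodule.coe_eq_zero] using ha0
    obtain ⟨x0, hx0⟩ : ∃ x : Fin n → ℝ, Matrix.mulVec (a0 : Matrix (Fin n) (Fin n) ℝ) x ≠ 0 := by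
      by_contra h
      push_neg at h
      apply ha0'
      ext i j
      have := congrFun (h (Pi.single j 1)) i
      simpa using this
    set ℓ : Fin n → ℝ := Matrix.mulVec (a0 : Matrix (Fin n) (Fin n) ℝ) x0 with hℓdef
    have hℓK : ℓ ∈ K := hrange _ a0.2 x0
    -- the linear map μ : A → dualAnnihilator K
    set μ0 : Matrix (Fin n) (Fin n) ℝ →ₗ[ℝ] Module.Dual ℝ (Fin n → ℝ) :=
      { toFun := fun M => γ.comp (Matrix.mulVecLin M)
        map_add' := by
          intro M N
          ext x
          simp [Matrix.add_mulVec]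
        map_smul' := by
          intro c M
          ext x
          simp only [LinearMap.coe_comp, Function.comp_apply, Matrix.mulVecLin_apply,
            Matrix.smul_mulVec, map_smul, RingHom.id_apply, LinearMap.smul_apply,
            smul_eq_mul] } with hμ0def
    have hμ0 : ∀ (M : Matrix (Fin n) (Fin n) ℝ) (x : Fin n → ℝ),
        μ0 M x = γ (Matrix.mulVec M x) := fun M x => rfl
    have hann : ∀ a : A, μ0 (a : Matrix (Fin n) (Fin n) ℝ) ∈ K.dualAnnihilator := by
      intro a
      rw [Submodule.mem_dualAnnihilator]
      intro w hw
      rw [hμ0, (hKmem w).1 hw a.1 a.2, map_zero]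
    set μ : A →ₗ[ℝ] K.dualAnnihilator :=
      LinearMap.codRestrict _ (μ0.comp A.subtype) (fun a => hann a) with hμdef
    have hinj : Function.Injective μ := by
      refine (injective_iff_map_eq_zero _).mpr ?_
      intro a h
      have h' : ∀ x, γ (Matrix.mulVec (a : Matrix (Fin n) (Fin n) ℝ) x) = 0 := by
        intro x
        have := congrArg (fun f : K.dualAnnihilator => (f : Module.Dual ℝ (Fin n → ℝ)) x) h
        exact this
      exact Subtype.ext (Inj a.1 a.2 h')
    -- finrank bounds
    have hfin : Module.finrank ℝ A ≤ Module.finrank ℝ K.dualAnnihilator :=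
      LinearMap.finrank_le_finrank_of_injective hinj
    have hannK : Module.finrank ℝ K.dualAnnihilator
        = Module.finrank ℝ ((Fin n → ℝ) ⧸ K) :=
      ((Subspace.quotEquivAnnihilator K).finrank_eq).symm
    have hquot := Submodule.finrank_quotient_add_finrank K
    have hV : Module.finrank ℝ (Fin n → ℝ) = n := by
      simp [Module.finrank_pi]
    have hKfin : Module.finrank ℝ K ≤ 1 := by
      rw [hdim] at hfin
      rw [hannK] at hfin
      omega
    -- K = span ℓ
    have hKeq : Submodule.span ℝ {ℓ} = K := by
      refine Submodule.eq_of_le_of_finrank_le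
        ((Submodule.span_singleton_le_iff_mem _ _).2 hℓK) ?_
      rw [finrank_span_singleton hx0]
      exact hKfin
    have hMl : ∀ a ∈ A, Matrix.mulVec a ℓ = 0 := fun a ha => (hKmem ℓ).1 hℓK a ha
    have hMr : ∀ a ∈ A, ∀ x : Fin n → ℝ, ∃ c : ℝ, Matrix.mulVec a x = c • ℓ := by
      intro a ha x
      have hx := hrange a ha x
      rw [← hKeq] at hx
      obtain ⟨c, hc⟩ := Submodule.mem_span_singleton.1 hx
      exact ⟨c, hc.symm⟩
    -- build a basis containing ℓ, and the change-of-basis matrix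
    have hli : LinearIndepOn ℝ id ({ℓ} : Set (Fin n → ℝ)) :=
      (linearIndepOn_singleton_iff ℝ).2 hx0
    set b : Module.Basis _ ℝ (Fin n → ℝ) := Module.Basis.extend hli with hbdef
    have hℓmem : ℓ ∈ hli.extend (Set.subset_univ _) :=
      hli.subset_extend (Set.subset_univ _) rfl
    set σ := b.indexEquiv (Pi.basisFun ℝ (Fin n)) with hσdef
    set e : Fin n ≃ _ := (Equiv.swap (σ ⟨ℓ, hℓmem⟩) i0).trans σ.symm with hedef
    have he0 : e i0 = ⟨ℓ, hℓmem⟩ := by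
      rw [hedef]
      simp [Equiv.swap_apply_right]
    set g : (Fin n → ℝ) ≃ₗ[ℝ] (Fin n → ℝ) := (Pi.basisFun ℝ (Fin n)).equiv b e with hgdef
    have hg : g (Pi.single i0 1) = ℓ := by
      have h := Module.Basis.equiv_apply (Pi.basisFun ℝ (Fin n)) i0 b e
      rw [Pi.basisFun_apply] at h
      rw [hgdef, h, he0, Module.Basis.extend_apply_self]
    have hgsymm : g.symm ℓ = Pi.single i0 1 := by
      rw [← hg, LinearEquiv.symm_apply_apply]
    set Q : Matrix (Fin n) (Fin n) ℝ :=
      LinearMap.toMatrix' (g : (Fin n → ℝ) →ₗ[ℝ] (Fin n → ℝ)) with hQdef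
    set Q' : Matrix (Fin n) (Fin n) ℝ :=
      LinearMap.toMatrix' (g.symm : (Fin n → ℝ) →ₗ[ℝ] (Fin n → ℝ)) with hQ'def
    have hQv : ∀ x : Fin n → ℝ, Matrix.mulVec Q x = g x := by
      intro x
      rw [hQdef, ← Matrix.toLin'_apply, Matrix.toLin'_toMatrix']
      rfl
    have hQ'v : ∀ x : Fin n → ℝ, Matrix.mulVec Q' x = g.symm x := by
      intro x
      rw [hQ'def, ← Matrix.toLin'_apply, Matrix.toLin'_toMatrix']
      rfl
    have hQQ' : Q * Q' = 1 := by
      rw [hQdef, hQ'def, ← LinearMap.toMatrix'_comp, ← LinearMap.toMatrix'_id (R := ℝ) (n := Fin n)]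
      congr 1
      ext x
      simp
    have hQ'Q : Q' * Q = 1 := by
      rw [hQdef, hQ'def, ← LinearMap.toMatrix'_comp, ← LinearMap.toMatrix'_id (R := ℝ) (n := Fin n)]
      congr 1
      ext x
      simp
    refine ⟨⟨Q', Q, hQ'Q, hQQ'⟩, ?_⟩
    -- the conjugation as a linear equivalence
    set fl : Matrix (Fin n) (Fin n) ℝ →ₗ[ℝ] Matrix (Fin n) (Fin n) ℝ :=
      (LinearMap.mulLeft ℝ Q').comp (LinearMap.mulRight ℝ Q) with hfldef
    set gl : Matrix (Fin n) (Fin n) ℝ →ₗ[ℝ] Matrix (Fin n) (Fin n) ℝ :=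
      (LinearMap.mulLeft ℝ Q).comp (LinearMap.mulRight ℝ Q') with hgldef
    have hflgl : fl.comp gl = LinearMap.id := by
      ext M
      simp only [hfldef, hgldef, LinearMap.comp_apply, LinearMap.mulLeft_apply,
        LinearMap.mulRight_apply, LinearMap.id_apply]
      simp only [mul_assoc]
      rw [hQ'Q, mul_one, ← mul_assoc, hQ'Q, one_mul]
    have hglfl : gl.comp fl = LinearMap.id := by
      ext M
      simp only [hfldef, hgldef, LinearMap.comp_apply, LinearMap.mulLeft_apply,
        LinearMap.mulRight_apply, LinearMap.id_apply]
      simp only [mul_assoc]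
      rw [hQQ', mul_one, ← mul_assoc, hQQ', one_mul]
    set fe : Matrix (Fin n) (Fin n) ℝ ≃ₗ[ℝ] Matrix (Fin n) (Fin n) ℝ :=
      LinearEquiv.ofLinear fl gl hflgl hglfl with hfedef
    -- entries of conjugated matrices
    have hentries : ∀ M ∈ A, (∀ i j, i ≠ i0 → (Q' * (M * Q)) i j = 0) ∧
        (∀ i, (Q' * (M * Q)) i i0 = 0) := by
      intro M hM
      have hmv : ∀ x : Fin n → ℝ, Matrix.mulVec (Q' * (M * Q)) x
          = g.symm (Matrix.mulVec M (g x)) := by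
        intro x
        rw [← Matrix.mulVec_mulVec, ← Matrix.mulVec_mulVec, hQv, hQ'v]
      constructor
      · intro i j hi
        obtain ⟨c, hc⟩ := hMr M hM (g (Pi.single j 1))
        have h := congrFun (hmv (Pi.single j 1)) i
        rw [hc, map_smul, hgsymm] at h
        rw [Matrix.mulVec_single_one] at h
        simp only [Matrix.col_apply] at h
        rw [h, Pi.smul_apply, Pi.single_eq_of_ne hi, smul_zero]
      · intro i
        have h := congrFun (hmv (Pi.single i0 1)) i
        rw [hg, hMl M hM, map_zero] at h
        rw [Matrix.mulVec_single_one] at h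
        simp only [Matrix.col_apply] at h
        rw [h, Pi.zero_apply]
    -- image is contained in S
    have hle : A.map (fe : Matrix (Fin n) (Fin n) ℝ →ₗ[ℝ] Matrix (Fin n) (Fin n) ℝ) ≤ S := by
      rintro y hy
      obtain ⟨M, hM, rfl⟩ := Submodule.mem_map.1 hy
      obtain ⟨h1, h2⟩ := hentries M hM
      have hfeM : (fe : Matrix (Fin n) (Fin n) ℝ →ₗ[ℝ] _) M = Q' * (M * Q) := rfl
      rw [hfeM]
      have hsum : Q' * (M * Q) = ∑ j : {j : Fin n // j ≠ i0},
          (Q' * (M * Q)) i0 j.val • Matrix.single i0 j.val (1 : ℝ) := by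
        ext i j
        rw [Matrix.sum_apply]
        by_cases hi : i = i0
        · subst hi
          by_cases hj : j = i0
          · subst hj
            rw [h2 i0]
            apply (Finset.sum_eq_zero _).symm
            intro k _
            simp [Matrix.single, k.2]
          · rw [Finset.sum_eq_single (⟨j, hj⟩ : {j : Fin n // j ≠ i0})]
            · simp [Matrix.single]
            · intro k _ hk
              have : k.val ≠ j := fun h => hk (Subtype.ext h)
              simp [Matrix.single, this]
            · intro h
              exact absurd (Finset.mem_univ _) h
        · rw [h1 i j hi]
          apply (Finset.sum_eq_zero _).symm
          intro k _
          simp [Matrix.single, Ne.symm hi]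
      rw [hsum]
      exact Submodule.sum_mem _ fun j _ => Submodule.smul_mem _ _
        (Submodule.subset_span ⟨j, rfl⟩)
    -- dimension count
    have hcard : Fintype.card {j : Fin n // j ≠ i0} = n - 1 := by
      rw [Fintype.card_subtype_compl, Fintype.card_fin, Fintype.card_subtype_eq]
    have hrankS : Module.finrank ℝ S ≤ n - 1 := by
      rw [hSdef]
      exact (finrank_range_le_card _).trans_eq hcard
    have hrankmap : Module.finrank ℝ
        (A.map (fe : Matrix (Fin n) (Fin n) ℝ →ₗ[ℝ] Matrix (Fin n) (Fin n) ℝ)) = n - 1 := by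
      rw [LinearEquiv.finrank_map_eq, hdim]
    have heq : A.map (fe : Matrix (Fin n) (Fin n) ℝ →ₗ[ℝ] Matrix (Fin n) (Fin n) ℝ) = S :=
      Submodule.eq_of_le_of_finrank_le hle (hrankS.trans_eq hrankmap.symm)
    -- conclude
    have hfun : (fun M : Matrix (Fin n) (Fin n) ℝ => Q' * M * Q)
        = ⇑(fe : Matrix (Fin n) (Fin n) ℝ →ₗ[ℝ] Matrix (Fin n) (Fin n) ℝ) := by
      funext M
      show Q' * M * Q = Q' * (M * Q)
      rw [mul_assoc]
    show (fun M : Matrix (Fin n) (Fin n) ℝ => Q' * M * Q) '' A = ↑S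
    rw [hfun, ← Submodule.map_coe, heq]
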